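/- The Glynn-Kan formula: for any N×N complex matrix A with N ≥ 1, Per(A) = (1/(N! 2^{2N})) Σ_{x,x' ∈ {-1,1}^N} (Π_{k=1}^N x_k x'_k)(x'^T A x)^N. -/

import Mathlib

open Finset BigOperators

noncomputable def perm {n : Type*} [Fintype n] [DecidableEq n] (A : Matrix n n ℂ) : ℂ :=
  ∑ σ : Equiv.Perm n, ∏ j, A j (σ j)

/-- A sign `∈ {-1,1}`, encoded by a Boolean. -/
def sgn (b : Bool) : ℂ := if b then 1 else -1

lemma sum_sgn_pow (m : ℕ) : ∑ b : Bool, sgn b ^ m = if Even m then 2 else 0 := by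
  rcases Nat.even_or_odd m with h | h
  · simp only [Fintype.sum_bool, sgn, if_pos, if_neg Bool.false_ne_true, if_true,
      one_pow, h.neg_one_pow, if_pos h]
    norm_num
  · simp only [Fintype.sum_bool, sgn, if_true, one_pow,
      if_neg (Nat.not_even_iff_odd.mpr h)]
    rw [show ((if false = true then 1 else -1 : ℂ)) = -1 by norm_num, h.neg_one_pow]
    ring

lemma orthog {N : ℕ} (g : Fin N → Fin N) :
    ∑ x : Fin N → Bool, (∏ k, sgn (x k)) * ∏ i, sgn (x (g i)) =
      if Function.Bijective g then (2 : ℂ) ^ N else 0 := by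
  have h1 : ∀ x : Fin N → Bool,
      (∏ k, sgn (x k)) * ∏ i, sgn (x (g i)) =
        ∏ k, sgn (x k) ^ (1 + (univ.filter fun i => g i = k).card) := by
    intro x
    rw [← Finset.prod_fiberwise' univ g (fun k => sgn (x k)), ← Finset.prod_mul_distrib]
    exact Finset.prod_congr rfl fun k _ => by
      rw [Finset.prod_const, pow_add, pow_one]
  simp_rw [h1]
  rw [← Fintype.prod_sum (fun k (b : Bool) => sgn b ^ (1 + (univ.filter fun i => g i = k).card))]
  simp_rw [sum_sgn_pow]
  by_cases hb : Function.Bijective g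
  · have hcard : ∀ k, (univ.filter fun i => g i = k).card = 1 := by
      intro k
      have he : (univ.filter fun i => g i = k) = {(Equiv.ofBijective g hb).symm k} := by
        ext i
        simp only [Finset.mem_filter, Finset.mem_univ, true_and, Finset.mem_singleton]
        constructor
        · rintro rfl
          exact ((Equiv.ofBijective g hb).symm_apply_apply i).symm
        · rintro rfl
          exact (Equiv.ofBijective g hb).apply_symm_apply k
      rw [he, Finset.card_singleton]
    rw [if_pos hb]
    simp [hcard]
  · have hs : ¬ Function.Surjective g := fun hsurj => hb (Finite.surjective_iff_bijective.mp hsurj)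
    rw [Function.Surjective] at hs
    push_neg at hs
    obtain ⟨k, hk⟩ := hs
    rw [if_neg hb]
    apply Finset.prod_eq_zero (Finset.mem_univ k)
    have he : (univ.filter fun i => g i = k) = ∅ := by
      ext i
      simp only [Finset.mem_filter, Finset.mem_univ, true_and, Finset.notMem_empty,
        iff_false]
      exact hk i
    rw [he]
    simp

lemma sum_bij_ite {N : ℕ} (F : (Fin N → Fin N) → ℂ) :
    ∑ f : Fin N → Fin N, (if Function.Bijective f then F f else 0) =
      ∑ σ : Equiv.Perm (Fin N), F ⇑σ := by
  rw [Finset.sum_ite, Finset.sum_const_zero, add_zero]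
  refine (Finset.sum_bij' (fun (σ : Equiv.Perm (Fin N)) _ => ⇑σ)
    (fun f hf => Equiv.ofBijective f (by
      simpa only [Finset.mem_filter, Finset.mem_univ, true_and] using hf)) ?_ ?_ ?_ ?_ ?_).symm
  · intro σ _
    simp only [Finset.mem_filter, Finset.mem_univ, true_and]
    exact σ.bijective
  · intro f hf
    exact Finset.mem_univ _
  · intro σ _
    exact Equiv.ext fun i => rfl
  · intro f hf
    rfl
  · intro σ _
    rfl

lemma perm_double {N : ℕ} (A : Matrix (Fin N) (Fin N) ℂ) :
    ∑ σ : Equiv.Perm (Fin N), ∑ τ : Equiv.Perm (Fin N), ∏ i, A (σ i) (τ i) =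
      (N.factorial : ℂ) * ∑ σ : Equiv.Perm (Fin N), ∏ j, A j (σ j) := by
  have h : ∀ σ : Equiv.Perm (Fin N),
      ∑ τ : Equiv.Perm (Fin N), ∏ i, A (σ i) (τ i) =
        ∑ τ : Equiv.Perm (Fin N), ∏ j, A j (τ j) := by
    intro σ
    have h1 : ∀ τ : Equiv.Perm (Fin N),
        ∏ i, A (σ i) (τ i) = ∏ j, A j ((τ * σ⁻¹) j) := by
      intro τ
      rw [← Equiv.prod_comp σ (fun j => A j ((τ * σ⁻¹) j))]
      exact Finset.prod_congr rfl fun i _ => by simp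
    simp_rw [h1]
    exact Fintype.sum_equiv (Equiv.mulRight σ⁻¹) _ _ (fun τ => rfl)
  simp_rw [h]
  rw [Finset.sum_const, Finset.card_univ, Fintype.card_perm, Fintype.card_fin, nsmul_eq_mul]

/-- The Glynn-Kan formula for the permanent. -/
theorem glynn_kan_formula (N : ℕ) (hN : 1 ≤ N) (A : Matrix (Fin N) (Fin N) ℂ) :
    perm A =
      (1 / ((N.factorial : ℂ) * 2 ^ (2 * N))) *
        ∑ x : Fin N → Bool, ∑ x' : Fin N → Bool,
          (∏ k : Fin N, sgn (x k) * sgn (x' k)) *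
            (∑ j : Fin N, ∑ k : Fin N, sgn (x' j) * A j k * sgn (x k)) ^ N := by
  have key : ∀ x x' : Fin N → Bool,
      (∏ k : Fin N, sgn (x k) * sgn (x' k)) *
        (∑ j : Fin N, ∑ k : Fin N, sgn (x' j) * A j k * sgn (x k)) ^ N =
      ∑ f : Fin N → Fin N × Fin N,
        ((∏ k, sgn (x k)) * ∏ i, sgn (x (f i).2)) *
        (((∏ k, sgn (x' k)) * ∏ i, sgn (x' (f i).1)) * ∏ i, A (f i).1 (f i).2) := by
    intro x x'
    rw [← Fintype.sum_prod_type', Fintype.sum_pow, Finset.mul_sum]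
    refine Finset.sum_congr rfl fun f _ => ?_
    simp only [Finset.prod_mul_distrib]
    ring
  have hT : ∑ x : Fin N → Bool, ∑ x' : Fin N → Bool,
      (∏ k : Fin N, sgn (x k) * sgn (x' k)) *
        (∑ j : Fin N, ∑ k : Fin N, sgn (x' j) * A j k * sgn (x k)) ^ N =
      (2:ℂ) ^ N * ((2:ℂ) ^ N * ((N.factorial : ℂ) * perm A)) := by
    simp_rw [key]
    calc
      ∑ x : Fin N → Bool, ∑ x' : Fin N → Bool, ∑ f : Fin N → Fin N × Fin N,
          ((∏ k, sgn (x k)) * ∏ i, sgn (x (f i).2)) *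
          (((∏ k, sgn (x' k)) * ∏ i, sgn (x' (f i).1)) * ∏ i, A (f i).1 (f i).2)
        = ∑ f : Fin N → Fin N × Fin N, ∑ x : Fin N → Bool, ∑ x' : Fin N → Bool,
          ((∏ k, sgn (x k)) * ∏ i, sgn (x (f i).2)) *
          (((∏ k, sgn (x' k)) * ∏ i, sgn (x' (f i).1)) * ∏ i, A (f i).1 (f i).2) := by
          rw [show (∑ x : Fin N → Bool, ∑ x' : Fin N → Bool, ∑ f : Fin N → Fin N × Fin N,
            ((∏ k, sgn (x k)) * ∏ i, sgn (x (f i).2)) *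
            (((∏ k, sgn (x' k)) * ∏ i, sgn (x' (f i).1)) * ∏ i, A (f i).1 (f i).2)) =
            ∑ x : Fin N → Bool, ∑ f : Fin N → Fin N × Fin N, ∑ x' : Fin N → Bool,
            ((∏ k, sgn (x k)) * ∏ i, sgn (x (f i).2)) *
            (((∏ k, sgn (x' k)) * ∏ i, sgn (x' (f i).1)) * ∏ i, A (f i).1 (f i).2)
            from Finset.sum_congr rfl fun x _ => Finset.sum_comm]
          exact Finset.sum_comm
      _ = ∑ f : Fin N → Fin N × Fin N,
          (∑ x : Fin N → Bool, (∏ k, sgn (x k)) * ∏ i, sgn (x (f i).2)) *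
          ((∑ x' : Fin N → Bool, (∏ k, sgn (x' k)) * ∏ i, sgn (x' (f i).1)) *
            ∏ i, A (f i).1 (f i).2) := by
          refine Finset.sum_congr rfl fun f _ => ?_
          symm
          rw [Finset.sum_mul]
          refine Finset.sum_congr rfl fun x _ => ?_
          rw [Finset.sum_mul, Finset.mul_sum]
      _ = ∑ f : Fin N → Fin N × Fin N,
          (if Function.Bijective (fun i => (f i).2) then (2:ℂ)^N else 0) *
          ((if Function.Bijective (fun i => (f i).1) then (2:ℂ)^N else 0) *
            ∏ i, A (f i).1 (f i).2) := by
          refine Finset.sum_congr rfl fun f _ => ?_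
          rw [orthog (fun i => (f i).2), orthog (fun i => (f i).1)]
      _ = ∑ f1 : Fin N → Fin N, ∑ f2 : Fin N → Fin N,
          (if Function.Bijective f2 then (2:ℂ)^N else 0) *
          ((if Function.Bijective f1 then (2:ℂ)^N else 0) *
            ∏ i, A (f1 i) (f2 i)) := by
          rw [← Fintype.sum_prod_type']
          exact Fintype.sum_equiv
            (Equiv.arrowProdEquivProdArrow (Fin N) (fun _ => Fin N) (fun _ => Fin N)) _ _ (fun f => rfl)
      _ = ∑ f1 : Fin N → Fin N, ∑ f2 : Fin N → Fin N,
          (if Function.Bijective f2 then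
            (if Function.Bijective f1 then
              (2:ℂ)^N * ((2:ℂ)^N * ∏ i, A (f1 i) (f2 i)) else 0) else 0) := by
          refine Finset.sum_congr rfl fun f1 _ => Finset.sum_congr rfl fun f2 _ => ?_
          split_ifs <;> ring
      _ = ∑ f1 : Fin N → Fin N, ∑ τ : Equiv.Perm (Fin N),
          (if Function.Bijective f1 then
            (2:ℂ)^N * ((2:ℂ)^N * ∏ i, A (f1 i) (τ i)) else 0) := by
          exact Finset.sum_congr rfl fun f1 _ => sum_bij_ite _
      _ = ∑ f1 : Fin N → Fin N,
          (if Function.Bijective f1 then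
            ∑ τ : Equiv.Perm (Fin N), (2:ℂ)^N * ((2:ℂ)^N * ∏ i, A (f1 i) (τ i)) else 0) := by
          refine Finset.sum_congr rfl fun f1 _ => ?_
          split_ifs <;> simp
      _ = ∑ σ : Equiv.Perm (Fin N), ∑ τ : Equiv.Perm (Fin N),
          (2:ℂ)^N * ((2:ℂ)^N * ∏ i, A (σ i) (τ i)) := sum_bij_ite _
      _ = (2:ℂ)^N * ((2:ℂ)^N *
          ∑ σ : Equiv.Perm (Fin N), ∑ τ : Equiv.Perm (Fin N), ∏ i, A (σ i) (τ i)) := by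
          simp_rw [← Finset.mul_sum]
      _ = (2:ℂ) ^ N * ((2:ℂ) ^ N * ((N.factorial : ℂ) * perm A)) := by
          rw [perm_double]
          rfl
  rw [hT]
  have h2 : (2:ℂ) ^ (2 * N) = 2 ^ N * 2 ^ N := by rw [two_mul, pow_add]
  have hf : (N.factorial : ℂ) ≠ 0 := Nat.cast_ne_zero.mpr N.factorial_ne_zero
  have h2n : (2:ℂ) ^ N ≠ 0 := pow_ne_zero _ two_ne_zero
  rw [h2]
  field_simp
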